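/- arXiv:2007.01244 — 2 statements merged into one kernel-verified Lean document; each statement's English description precedes it below -/
import Mathlib

section
/- Let $\mathfrak{g}$ be a finite-dimensional Lie algebra, $x\in\mathfrak{g}$ with $\mathrm{ad}\,x$ semisimple, and $n\in\mathfrak{g}$ with $[x,n]=0$ and $\mathrm{ad}\,n$ nilpotent. Set $\mathfrak{h}=\ker(\mathrm{ad}\,x)$ and $\mathfrak{h}^\perp=\mathrm{im}(\mathrm{ad}\,x)$. Then for every $A\in\mathfrak{g}$ there exist unique $h\in\mathfrak{h}$ and $U\in\mathfrak{h}^\perp$ such that $h+[x+n,U]=A$. -/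
open LinearMap Module

/-- Key decomposition lemma.  With `ad x` semisimple, `[x,n] = 0` and
`ad n` nilpotent, every `A ∈ 𝔤` decomposes uniquely as `A = h + [x + n, U]` with
`h ∈ ker (ad x)` and `U ∈ im (ad x)`. -/
theorem stmt_5 {F L : Type*} [Field F] [LieRing L] [LieAlgebra F L]
    [FiniteDimensional F L]
    (x n : L) (hcomm : ⁅x, n⁆ = 0)
    (hss : (LieAlgebra.ad F L x).IsSemisimple)
    (hnil : IsNilpotent (LieAlgebra.ad F L n)) :
    ∀ A : L, ∃! p : L × L,
      p.1 ∈ LinearMap.ker (LieAlgebra.ad F L x) ∧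
      p.2 ∈ LinearMap.range (LieAlgebra.ad F L x) ∧
      p.1 + ⁅x + n, p.2⁆ = A := by
  set f := LieAlgebra.ad F L x with hf
  set g := LieAlgebra.ad F L n with hg
  -- f and g commute
  have hfg : ∀ v : L, f (g v) = g (f v) := by
    intro v
    have h1 : LieAlgebra.ad F L ⁅x, n⁆ = ⁅LieAlgebra.ad F L x, LieAlgebra.ad F L n⁆ :=
      by letI := LieRing.ofAssociativeRing (A := Module.End F L); exact LieHom.map_lie (LieAlgebra.ad F L) x n
    rw [hcomm] at h1
    have h2 : f * g - g * f = 0 := by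
      rw [← Ring.lie_def, ← h1]; simp
    have h3 : f * g = g * f := by linear_combination (norm := noncomm_ring) h2
    exact congrFun (congrArg (fun m : Module.End F L => (m : L → L)) h3) v
  -- invariance of range f under g
  have hV : ∀ v ∈ LinearMap.range f, g v ∈ LinearMap.range f := by
    rintro _ ⟨u, rfl⟩
    exact ⟨g u, hfg u⟩
  -- ker f and range f are complementary
  have hker_invt : LinearMap.ker f ∈ Module.End.invtSubmodule f := by
    intro v hv
    simp only [Submodule.mem_comap]
    simp only [LinearMap.mem_ker] at hv ⊢
    simp [hv]
  obtain ⟨q, hq, hcompl⟩ := Module.End.isSemisimple_iff.mp hss _ hker_invt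
  have hdisj : Disjoint (LinearMap.ker f) (LinearMap.range f) := by
    rw [Submodule.disjoint_def]
    rintro v hv ⟨u, rfl⟩
    obtain ⟨k, hk, w, hw, rfl⟩ := Submodule.mem_sup.mp
      (hcompl.sup_eq_top ▸ Submodule.mem_top : u ∈ LinearMap.ker f ⊔ q)
    have hfu : f (k + w) = f w := by
      simp [LinearMap.mem_ker.mp hk]
    have hmemq : f (k + w) ∈ q := hfu ▸ hq hw
    exact Submodule.disjoint_def.mp hcompl.disjoint _ hv hmemq
  have hcodis : LinearMap.ker f ⊔ LinearMap.range f = ⊤ := by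
    apply Submodule.eq_top_of_disjoint
    · rw [add_comm]; exact (LinearMap.finrank_range_add_finrank_ker f).ge
    · exact hdisj
  -- restricted endomorphisms on V := range f
  set V := LinearMap.range f with hVdef
  have hfV : ∀ v ∈ V, f v ∈ V := fun v _ => ⟨v, rfl⟩
  set fres : V →ₗ[F] V := f.restrict hfV with hfres
  set gres : V →ₗ[F] V := g.restrict hV with hgres
  -- fres is a unit
  have hfres_inj : Function.Injective fres := by
    rw [← LinearMap.ker_eq_bot]
    rw [Submodule.eq_bot_iff]
    rintro ⟨v, hv⟩ hker
    have : f v = 0 := congrArg Subtype.val hker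
    have hv0 : v = 0 := by
      have := Submodule.disjoint_def.mp hdisj v (LinearMap.mem_ker.mpr this) hv
      exact this
    exact Subtype.ext hv0
  have hfres_unit : IsUnit fres :=
    (Module.End.isUnit_iff fres).mpr
      ⟨hfres_inj, (LinearMap.injective_iff_surjective).mp hfres_inj⟩
  -- gres is nilpotent
  have hgres_nil : IsNilpotent gres := by
    obtain ⟨k, hk⟩ := hnil
    refine ⟨k, ?_⟩
    rw [hgres, Module.End.pow_restrict]
    ext v
    simp [hk]
  -- commute
  have hcomm_res : Commute gres fres := by
    ext v
    have : (gres * fres) v = (fres * gres) v := by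
      apply Subtype.ext
      simp only [Module.End.mul_apply, hfres, hgres, LinearMap.restrict_apply]
      exact (hfg _).symm
    exact congrArg Subtype.val this
  have hunit : IsUnit (fres + gres) :=
    hgres_nil.isUnit_add_left_of_commute hfres_unit hcomm_res
  have hbij := (Module.End.isUnit_iff _).mp hunit
  -- The map U ↦ ⁅x+n, U⁆ on V
  have hphi : ∀ (U : L) (hU : U ∈ V), ⁅x + n, U⁆ = ((fres + gres) ⟨U, hU⟩ : L) := by
    intro U hU
    simp only [LinearMap.add_apply, Submodule.coe_add, LinearMap.restrict_apply]
    show ⁅x + n, U⁆ = f U + g U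
    rw [add_lie]
    rfl
  intro A
  -- decompose A
  obtain ⟨h0, hh0, r, hr, rfl⟩ := Submodule.mem_sup.mp
    (hcodis ▸ Submodule.mem_top : A ∈ LinearMap.ker f ⊔ V)
  obtain ⟨U, hU⟩ := hbij.2 ⟨r, hr⟩
  refine ⟨(h0, U.1), ⟨hh0, U.2, ?_⟩, ?_⟩
  · rw [hphi U.1 U.2]
    exact congrArg (fun z => h0 + z) (congrArg Subtype.val hU)
  · rintro ⟨h', U'⟩ ⟨hh', hU', heq⟩
    have hlie : ⁅x + n, U'⁆ ∈ V := by
      rw [hphi U' hU']; exact ((fres + gres) ⟨U', hU'⟩).2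
    -- uniqueness of direct sum decomposition
    have hsum : h' + ⁅x + n, U'⁆ = h0 + r := heq
    have heq1 : h' - h0 = r - ⁅x + n, U'⁆ := by
      rw [sub_eq_sub_iff_add_eq_add, hsum, add_comm]
    have hmk : h' - h0 ∈ LinearMap.ker f := sub_mem hh' hh0
    have hmr : h' - h0 ∈ V := heq1 ▸ sub_mem hr hlie
    have h0eq : h' - h0 = 0 := Submodule.disjoint_def.mp hdisj _ hmk hmr
    have hh : h' = h0 := by rwa [sub_eq_zero] at h0eq
    have hreq : ⁅x + n, U'⁆ = r :=
      (sub_eq_zero.mp (heq1 ▸ h0eq)).symm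
    have hUeq : (⟨U', hU'⟩ : V) = U := by
      apply hbij.1
      rw [hU]
      apply Subtype.ext
      rw [← hphi U' hU', hreq]
    have : U' = U.1 := congrArg Subtype.val hUeq
    exact Prod.ext hh this
end

section
/- Let $\mathfrak{g}$ be a finite-dimensional Lie algebra with a nondegenerate symmetric invariant bilinear form $(\cdot|\cdot)$, let $(e,h,f)$ be an $\mathfrak{sl}_2$-triple, and let $\mathfrak{g}_{\frac12}$ be the $\mathrm{ad}\,\frac{h}{2}$-eigenspace with eigenvalue $\frac12$. Then the bilinear form $\omega(a,b)=(f|[a,b])$ on $\mathfrak{g}_{\frac12}$ is skew-symmetric and nondegenerate. -/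
open LieModule Module

set_option linter.unusedSectionVars false
set_option maxHeartbeats 1000000

section Aux

variable {F L : Type*} [Field F] [CharZero F]
    [LieRing L] [LieAlgebra F L] [FiniteDimensional F L]

lemma s7_exists_zero (T : Module.End F L) (c : ℕ → F) (hc : Function.Injective c)
    (x : ℕ → L) (hx : ∀ k, T (x k) = c k • x k) : ∃ k, x k = 0 := by
  by_contra hcon
  push_neg at hcon
  have li := T.eigenvectors_linearIndependent' c hc x
    (fun k ↦ ⟨Module.End.mem_eigenspace_iff.mpr (hx k), hcon k⟩)
  have := li.lt_aleph0_of_finiteDimensional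
  simp at this

variable {e h f : L}

lemma s7_comm (hhe : ⁅h, e⁆ = (2 : F) • e) (k : ℕ) (x : L) :
    ⁅h, ((LieModule.toEnd F L L e) ^ k) x⁆
      = ((LieModule.toEnd F L L e) ^ k) ⁅h, x⁆
        + ((2 * k : F)) • ((LieModule.toEnd F L L e) ^ k) x := by
  induction k with
  | zero => simp
  | succ k ih =>
    have hs : ∀ y : L, ((LieModule.toEnd F L L e) ^ (k+1)) y
        = ⁅e, ((LieModule.toEnd F L L e) ^ k) y⁆ := by
      intro y; rw [pow_succ']; simp
    rw [hs, hs, leibniz_lie h e, hhe, ih]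
    rw [lie_add, lie_smul, smul_lie]
    push_cast
    module

lemma s7_triple (hhe : ⁅h, e⁆ = (2 : F) • e) (hhf : ⁅h, f⁆ = (-2 : F) • f)
    (hef : ⁅e, f⁆ = h) (hh : h ≠ 0) : IsSl2Triple h e f where
  h_ne_zero := hh
  lie_e_f := hef
  lie_h_e_nsmul := by rw [hhe, two_smul, two_nsmul]
  lie_h_f_nsmul := by rw [hhf]; rw [two_nsmul]; module

/-- The key string computation: a primitive vector `z` of weight `n` cannot be of the form
`(ad h - n) w` with `⁅e, w⁆ = 0`. -/
lemma s7_main (hhe : ⁅h, e⁆ = (2 : F) • e) (hhf : ⁅h, f⁆ = (-2 : F) • f)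
    (hef : ⁅e, f⁆ = h) (hh : h ≠ 0) (n : ℕ) (z w : L) (hz0 : z ≠ 0)
    (hzh : ⁅h, z⁆ = (n : F) • z) (hze : ⁅e, z⁆ = 0)
    (hwh : ⁅h, w⁆ = (n : F) • w + z) (hwe : ⁅e, w⁆ = 0) : False := by
  have t : IsSl2Triple h e f := s7_triple hhe hhf hef hh
  have P : t.HasPrimitiveVectorWith z (n : F) := ⟨hz0, hzh, hze⟩
  have hstep : ∀ (x : L) (i : ℕ), ((LieModule.toEnd F L L f) ^ (i+1)) x
      = ⁅f, ((LieModule.toEnd F L L f) ^ i) x⁆ := by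
    intro x i; rw [pow_succ']; simp
  set Ff := LieModule.toEnd F L L f with hFf
  set v : ℕ → L := fun i ↦ (Ff ^ i) z with hv
  set u : ℕ → L := fun i ↦ (Ff ^ i) w with hu
  have hv_h : ∀ i : ℕ, ⁅h, v i⁆ = ((n : F) - 2 * i) • v i := fun i ↦ P.lie_h_pow_toEnd_f i
  have hv_e : ∀ i : ℕ, ⁅e, v (i+1)⁆ = (((i : F) + 1) * ((n : F) - i)) • v i :=
    fun i ↦ P.lie_e_pow_succ_toEnd_f i
  have hvtop : v (n+1) = 0 := P.pow_toEnd_f_eq_zero_of_eq_nat rfl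
  have hvn : v n ≠ 0 := P.pow_toEnd_f_ne_zero_of_eq_nat rfl le_rfl
  have hvge : ∀ j : ℕ, n + 1 ≤ j → v j = 0 := by
    intro j hj
    obtain ⟨k, rfl⟩ := Nat.exists_eq_add_of_le hj
    show (Ff ^ (n+1+k)) z = 0
    rw [show n+1+k = k+(n+1) from by omega, pow_add, Module.End.mul_apply,
      show (Ff ^ (n+1)) z = v (n+1) from rfl, hvtop, map_zero]
  -- string relations for u
  have hu_h : ∀ i : ℕ, ⁅h, u i⁆ = ((n : F) - 2 * i) • u i + v i := by
    intro i
    induction i with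
    | zero => simpa [hu, hv] using hwh
    | succ i ih =>
      rw [show u (i+1) = ⁅f, u i⁆ from hstep w i, show v (i+1) = ⁅f, v i⁆ from hstep z i]
      rw [leibniz_lie h f, hhf, ih]
      rw [lie_add, lie_smul, smul_lie]
      push_cast
      module
  have hu_e : ∀ i : ℕ, ⁅e, u (i+1)⁆ = (((i : F) + 1) * ((n : F) - i)) • u i
      + ((i : F) + 1) • v i := by
    intro i
    induction i with
    | zero =>
      rw [show u 1 = ⁅f, u 0⁆ from hstep w 0, leibniz_lie e f, hef]
      have hu0 : u 0 = w := by simp [hu]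
      have hv0 : v 0 = z := by simp [hv]
      rw [hu0, hv0, hwe, hwh]
      simp
    | succ i ih =>
      rw [show u (i+2) = ⁅f, u (i+1)⁆ from hstep w (i+1), leibniz_lie e f, hef,
        hu_h (i+1), ih, lie_add, lie_smul, lie_smul,
        ← hstep w i, ← hstep z i]
      push_cast
      match_scalars <;> ring
  -- u (n+1) ≠ 0
  have hun1 : u (n+1) ≠ 0 := by
    intro hcon
    have := hu_e n
    rw [hcon, lie_zero] at this
    have hvn' : ((n : F) + 1) • v n = 0 := by
      rw [eq_comm] at this
      simpa using this
    rcases smul_eq_zero.mp hvn' with hc | hc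
    · exact (Nat.cast_add_one_ne_zero n : ((n:F) + 1) ≠ 0) hc
    · exact hvn hc
  -- find a zero above n+1
  have hex : ∃ k : ℕ, u (n+1+k) = 0 := by
    apply s7_exists_zero (LieModule.toEnd F L L h)
      (fun k ↦ (n : F) - 2 * ((n+1+k : ℕ) : F))
      (fun k k' hkk ↦ by
        have h4 : ((n+1+k : ℕ) : F) = ((n+1+k' : ℕ) : F) := by
          linear_combination (-(1:F)/2) * hkk
        have h5 : n+1+k = n+1+k' := Nat.cast_injective h4
        omega)
      (fun k ↦ u (n+1+k))
    intro k
    rw [LieModule.toEnd_apply_apply, hu_h (n+1+k), hvge (n+1+k) (by omega), add_zero]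
  obtain ⟨k, hk1, hk2⟩ := Nat.exists_not_and_succ_of_not_zero_of_exists
    (p := fun k ↦ u (n+1+k) = 0) (by simpa using hun1) hex
  -- derive contradiction from hu_e at i = n+1+k
  have he := hu_e (n+1+k)
  have hzero : u (n+1+(k+1)) = 0 := hk2
  rw [show n+1+(k+1) = (n+1+k)+1 by omega] at hzero
  rw [hzero, lie_zero, hvge (n+1+k) (by omega), smul_zero, add_zero, eq_comm,
    smul_eq_zero] at he
  rcases he with hc | hc
  · have h1 : (((n+1+k : ℕ) : F) + 1) ≠ 0 := Nat.cast_add_one_ne_zero _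
    have h2 : ((n : F) - ((n+1+k : ℕ) : F)) ≠ 0 := by
      intro hcon
      rw [sub_eq_zero, show ((n:F)) = ((n : ℕ) : F) from rfl] at hcon
      have h5 : n = n+1+k := Nat.cast_injective hcon
      omega
    exact (mul_ne_zero h1 h2) hc
  · exact hk1 hc

/-- The vanishing `(ad e)^k z = 0` for `k ≥ 1` when `⁅e, z⁆ = 0`. -/
lemma s7_epow_zero (z : L) (hze : ⁅e, z⁆ = 0) (k : ℕ) :
    ((LieModule.toEnd F L L e) ^ (k+1)) z = 0 := by
  rw [pow_succ, Module.End.mul_apply]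
  have : (LieModule.toEnd F L L e) z = 0 := by simpa using hze
  rw [this, map_zero]

/-- Descent: a nonzero primitive vector `z` of weight `n ≥ 1` is not of the form
`(ad h - n) w` when `(ad e)^K w = 0` for some `K`. -/
lemma s7_descend (hhe : ⁅h, e⁆ = (2 : F) • e) (hhf : ⁅h, f⁆ = (-2 : F) • f)
    (hef : ⁅e, f⁆ = h) (hh : h ≠ 0) (n : ℕ) (z : L) (hz0 : z ≠ 0)
    (hzh : ⁅h, z⁆ = (n : F) • z) (hze : ⁅e, z⁆ = 0) :
    ∀ K (w : L), ⁅h, w⁆ = (n : F) • w + z → ((LieModule.toEnd F L L e) ^ K) w = 0 → False := by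
  have t : IsSl2Triple h e f := s7_triple hhe hhf hef hh
  intro K
  induction K with
  | zero =>
    intro w hwh hw0
    simp only [pow_zero, Module.End.one_apply] at hw0
    rw [hw0, lie_zero, smul_zero, zero_add] at hwh
    exact hz0 hwh.symm
  | succ K ih =>
    intro w hwh hwK
    match K, ih with
    | 0, _ =>
      have hwe : ⁅e, w⁆ = 0 := by simpa using hwK
      exact s7_main hhe hhf hef hh n z w hz0 hzh hze hwh hwe
    | (K+1), ih =>
      by_cases hp : ((LieModule.toEnd F L L e) ^ (K+1)) w = 0
      · exact ih w hwh hp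
      · -- p is a primitive vector of weight n + 2(K+1)
        have hph : ⁅h, ((LieModule.toEnd F L L e) ^ (K+1)) w⁆
            = (((n + 2*(K+1) : ℕ) : F)) • ((LieModule.toEnd F L L e) ^ (K+1)) w := by
          rw [s7_comm hhe (K+1) w, hwh]
          rw [map_add, map_smul, s7_epow_zero z hze K]
          push_cast
          module
        have hpe : ⁅e, ((LieModule.toEnd F L L e) ^ (K+1)) w⁆ = 0 := by
          have h2 : ((LieModule.toEnd F L L e) ^ (K+2)) w = 0 := hwK
          rw [pow_succ', Module.End.mul_apply] at h2
          simpa using h2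
        have Pp : t.HasPrimitiveVectorWith (((LieModule.toEnd F L L e) ^ (K+1)) w)
            (((n + 2*(K+1) : ℕ) : F)) := ⟨hp, hph, hpe⟩
        -- (ad e)^j (ad f)^j p = c • p with c ≠ 0, for j ≤ K+1
        have claim : ∀ j : ℕ, j ≤ K + 1 → ∃ c : F, c ≠ 0 ∧
            ((LieModule.toEnd F L L e) ^ j) (((LieModule.toEnd F L L f) ^ j)
              (((LieModule.toEnd F L L e) ^ (K+1)) w)) = c • ((LieModule.toEnd F L L e) ^ (K+1)) w := by
          intro j
          induction j with
          | zero => intro _; exact ⟨1, one_ne_zero, by simp⟩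
          | succ j ihj =>
            intro hj
            obtain ⟨c, hc0, hc⟩ := ihj (by omega)
            refine ⟨(((j : F) + 1) * ((((n + 2*(K+1) : ℕ) : F)) - j)) * c, ?_, ?_⟩
            · apply mul_ne_zero (mul_ne_zero (Nat.cast_add_one_ne_zero j) ?_) hc0
              have h3 : (((n + 2*(K+1) : ℕ) : F)) - (j : F)
                  = ((n + 2*(K+1) - j : ℕ) : F) := by
                rw [Nat.cast_sub (by omega)]
              rw [h3]
              exact Nat.cast_ne_zero.mpr (by omega)
            · have he1 := Pp.lie_e_pow_succ_toEnd_f j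
              rw [pow_succ, Module.End.mul_apply]
              have hEapp : (LieModule.toEnd F L L e) (((LieModule.toEnd F L L f) ^ (j+1))
                  (((LieModule.toEnd F L L e) ^ (K+1)) w))
                  = (((j : F) + 1) * ((((n + 2*(K+1) : ℕ) : F)) - j))
                    • ((LieModule.toEnd F L L f) ^ j) (((LieModule.toEnd F L L e) ^ (K+1)) w) := by
                simpa using he1
              rw [hEapp, map_smul, hc, smul_smul]
        obtain ⟨c, hc0, hc⟩ := claim (K+1) le_rfl
        -- corrected vector
        set q := ((LieModule.toEnd F L L f) ^ (K+1)) (((LieModule.toEnd F L L e) ^ (K+1)) w) with hq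
        have hqh : ⁅h, q⁆ = (n : F) • q := by
          have h4 := Pp.lie_h_pow_toEnd_f (K+1)
          rw [hq]
          convert h4 using 2
          push_cast
          ring
        have hw1h : ⁅h, w - c⁻¹ • q⁆ = (n : F) • (w - c⁻¹ • q) + z := by
          rw [lie_sub, lie_smul, hqh, hwh]
          module
        have hw1K : ((LieModule.toEnd F L L e) ^ (K+1)) (w - c⁻¹ • q) = 0 := by
          rw [map_sub, map_smul, hq, hc, smul_smul, inv_mul_cancel₀ hc0, one_smul, sub_self]
        exact ih _ hw1h hw1K

/-- No Jordan block of `ad h` at eigenvalue `1`. -/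
lemma s7_crux (hhe : ⁅h, e⁆ = (2 : F) • e) (hhf : ⁅h, f⁆ = (-2 : F) • f)
    (hef : ⁅e, f⁆ = h) (hh : h ≠ 0) (z y : L) (hzh : ⁅h, z⁆ = z)
    (hzy : ⁅h, y⁆ - y = z) : z = 0 := by
  by_contra hz0
  -- the vectors `(ad e)^k z` are eigenvectors of weight `1 + 2k`
  have heig : ∀ k : ℕ, ⁅h, ((LieModule.toEnd F L L e) ^ k) z⁆
      = ((1 + 2*k : ℕ) : F) • ((LieModule.toEnd F L L e) ^ k) z := by
    intro k
    rw [s7_comm hhe k z, hzh]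
    push_cast
    module
  have hex : ∃ k : ℕ, ((LieModule.toEnd F L L e) ^ k) z = 0 := by
    apply s7_exists_zero (LieModule.toEnd F L L h) (fun k ↦ ((1 + 2*k : ℕ) : F))
      (fun k k' hkk ↦ by
        have h5 : 1 + 2*k = 1 + 2*k' := Nat.cast_injective hkk
        omega)
      (fun k ↦ ((LieModule.toEnd F L L e) ^ k) z)
    intro k
    rw [LieModule.toEnd_apply_apply]
    exact heig k
  obtain ⟨m, hm1, hm2⟩ := Nat.exists_not_and_succ_of_not_zero_of_exists
    (p := fun k ↦ ((LieModule.toEnd F L L e) ^ k) z = 0) (by simpa using hz0) hex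
  -- the primitive vector z' and the Jordan partner w
  have hz'h : ⁅h, ((LieModule.toEnd F L L e) ^ m) z⁆
      = ((1 + 2*m : ℕ) : F) • ((LieModule.toEnd F L L e) ^ m) z := heig m
  have hz'e : ⁅e, ((LieModule.toEnd F L L e) ^ m) z⁆ = 0 := by
    have h6 : ((LieModule.toEnd F L L e) ^ (m+1)) z = 0 := hm2
    rw [pow_succ', Module.End.mul_apply] at h6
    simpa using h6
  have hyz : ⁅h, y⁆ = y + z := by rw [← hzy]; abel
  have hwh : ⁅h, ((LieModule.toEnd F L L e) ^ m) y⁆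
      = ((1 + 2*m : ℕ) : F) • ((LieModule.toEnd F L L e) ^ m) y
        + ((LieModule.toEnd F L L e) ^ m) z := by
    rw [s7_comm hhe m y, hyz, map_add]
    push_cast
    module
  -- find K with (ad e)^K (E^m y) = 0
  have heig2 : ∀ k : ℕ, ⁅h, ((LieModule.toEnd F L L e) ^ (k+1)) (((LieModule.toEnd F L L e) ^ m) y)⁆
      = (((1 + 2*m) + 2*(k+1) : ℕ) : F) • ((LieModule.toEnd F L L e) ^ (k+1))
          (((LieModule.toEnd F L L e) ^ m) y) := by
    intro k
    rw [s7_comm hhe (k+1) _, hwh, map_add, map_smul, s7_epow_zero _ hz'e k]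
    push_cast
    module
  have hex2 : ∃ k : ℕ, ((LieModule.toEnd F L L e) ^ (k+1)) (((LieModule.toEnd F L L e) ^ m) y) = 0 := by
    apply s7_exists_zero (LieModule.toEnd F L L h) (fun k ↦ (((1 + 2*m) + 2*(k+1) : ℕ) : F))
      (fun k k' hkk ↦ by
        have h5 : (1 + 2*m) + 2*(k+1) = (1 + 2*m) + 2*(k'+1) := Nat.cast_injective hkk
        omega)
      (fun k ↦ ((LieModule.toEnd F L L e) ^ (k+1)) (((LieModule.toEnd F L L e) ^ m) y))
    intro k
    rw [LieModule.toEnd_apply_apply]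
    exact heig2 k
  obtain ⟨K, hK⟩ := hex2
  exact s7_descend hhe hhf hef hh (1 + 2*m) (((LieModule.toEnd F L L e) ^ m) z) hm1
    hz'h hz'e (K+1) (((LieModule.toEnd F L L e) ^ m) y) hwh hK

/-- A vector of weight 1 killed by `ad f` is zero. -/
lemma s7_fkill (hhe : ⁅h, e⁆ = (2 : F) • e) (hhf : ⁅h, f⁆ = (-2 : F) • f)
    (hef : ⁅e, f⁆ = h) (hh : h ≠ 0) (a : L) (hah : ⁅h, a⁆ = a)
    (hfa : ⁅f, a⁆ = 0) : a = 0 := by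
  by_contra ha0
  have t : IsSl2Triple h e f := s7_triple hhe hhf hef hh
  have P : t.symm.HasPrimitiveVectorWith a (-1 : F) := by
    refine ⟨ha0, ?_, hfa⟩
    rw [neg_lie, hah]
    module
  obtain ⟨n, hn⟩ := P.exists_nat
  have h7 : ((n + 1 : ℕ) : F) = 0 := by push_cast; rw [← hn]; ring
  exact Nat.succ_ne_zero n (Nat.cast_eq_zero.mp h7)

end Aux

/-- For an `sl₂`-triple `(e,h,f)` and a nondegenerate symmetric invariant
bilinear form `B` on a finite-dimensional Lie algebra, the form
`ω(a,b) = B f ⁅a,b⁆` on `𝔤_{1/2}` (the `ad h`-eigenspace with eigenvalue `1`) is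
skew-symmetric and nondegenerate. -/
theorem stmt_7 {F L : Type*} [Field F] [CharZero F]
    [LieRing L] [LieAlgebra F L] [FiniteDimensional F L]
    (B : L →ₗ[F] L →ₗ[F] F)
    (hsymm : ∀ a b : L, B a b = B b a)
    (hinv : ∀ a b c : L, B ⁅a, b⁆ c = B a ⁅b, c⁆)
    (hnondeg : ∀ a : L, (∀ b : L, B a b = 0) → a = 0)
    (e h f : L)
    (hhe : ⁅h, e⁆ = (2 : F) • e) (hhf : ⁅h, f⁆ = (-2 : F) • f) (hef : ⁅e, f⁆ = h) :
    (∀ a ∈ Module.End.eigenspace (LieAlgebra.ad F L h) 1,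
      ∀ b ∈ Module.End.eigenspace (LieAlgebra.ad F L h) 1,
        B f ⁅a, b⁆ = - B f ⁅b, a⁆) ∧
    (∀ a ∈ Module.End.eigenspace (LieAlgebra.ad F L h) 1,
      (∀ b ∈ Module.End.eigenspace (LieAlgebra.ad F L h) 1, B f ⁅a, b⁆ = 0) → a = 0) := by
  have hmem : ∀ x : L, x ∈ Module.End.eigenspace (LieAlgebra.ad F L h) 1 ↔ ⁅h, x⁆ = x := by
    intro x
    rw [Module.End.mem_eigenspace_iff, LieAlgebra.ad_apply, one_smul]
  constructor
  · intro a _ b _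
    have hba : (⁅b, a⁆ : L) = -⁅a, b⁆ := (neg_eq_iff_eq_neg.mp (lie_skew a b)).symm ▸ rfl
    rw [show (⁅b, a⁆ : L) = -⁅a, b⁆ from neg_eq_iff_eq_neg.mp (by exact lie_skew a b),
      map_neg, neg_neg]
  · intro a ha hab
    have hah : ⁅h, a⁆ = a := (hmem a).mp ha
    by_cases hh : h = 0
    · rw [hh, zero_lie] at hah; exact hah.symm
    -- x = ⁅f, a⁆
    have hx_h : ⁅h, ⁅f, a⁆⁆ = -⁅f, a⁆ := by
      rw [leibniz_lie h f a, hhf, hah, smul_lie]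
      module
    have key2 : ∀ y : L, B ⁅f, a⁆ ⁅h, y⁆ = B ⁅f, a⁆ y := by
      intro y
      have h11 : (⁅⁅f, a⁆, h⁆ : L) = ⁅f, a⁆ := by
        rw [show (⁅⁅f, a⁆, h⁆ : L) = -⁅h, ⁅f, a⁆⁆ from
          neg_eq_iff_eq_neg.mp (by exact lie_skew h ⁅f, a⁆), hx_h, neg_neg]
      rw [← hinv ⁅f, a⁆ h y, h11]
    have key3 : ∀ b : L, ⁅h, b⁆ = b → B ⁅f, a⁆ b = 0 := by
      intro b hb
      rw [hinv f a b]
      exact hab b ((hmem b).mpr hb)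
    -- B ⁅f,a⁆ vanishes identically
    have key0 : ∀ y : L, B ⁅f, a⁆ y = 0 := by
      set g : L →ₗ[F] L := (LieAlgebra.ad F L h : L →ₗ[F] L) - LinearMap.id with hg
      have hgapp : ∀ y : L, g y = ⁅h, y⁆ - y := by
        intro y; simp [hg]
      have hker : ∀ u ∈ LinearMap.ker g, B ⁅f, a⁆ u = 0 := by
        intro u hu
        rw [LinearMap.mem_ker, hgapp, sub_eq_zero] at hu
        exact key3 u hu
      have hrange : ∀ u ∈ LinearMap.range g, B ⁅f, a⁆ u = 0 := by
        rintro u ⟨y, rfl⟩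
        rw [hgapp, map_sub, key2, sub_self]
      have hinf : LinearMap.ker g ⊓ LinearMap.range g = ⊥ := by
        rw [eq_bot_iff]
        intro u hu
        rw [Submodule.mem_inf] at hu
        obtain ⟨hu1, hu2⟩ := hu
        obtain ⟨y, rfl⟩ := LinearMap.mem_range.mp hu2
        rw [LinearMap.mem_ker, hgapp, sub_eq_zero] at hu1
        have h9 : ⁅h, y⁆ - y = g y := (hgapp y).symm
        have h12 := s7_crux hhe hhf hef hh (g y) y hu1 h9
        simp [h12]
      have hsup : LinearMap.ker g ⊔ LinearMap.range g = ⊤ := by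
        apply Submodule.eq_top_of_finrank_eq
        have h10 := Submodule.finrank_sup_add_finrank_inf_eq (LinearMap.ker g) (LinearMap.range g)
        rw [hinf, finrank_bot, add_zero] at h10
        rw [h10, add_comm]
        exact LinearMap.finrank_range_add_finrank_ker g
      intro y
      have hy : y ∈ LinearMap.ker g ⊔ LinearMap.range g := hsup ▸ Submodule.mem_top
      obtain ⟨u, hu, v, hv, rfl⟩ := Submodule.mem_sup.mp hy
      rw [map_add, hker u hu, hrange v hv, add_zero]
    have hfa : ⁅f, a⁆ = 0 := hnondeg _ key0
    exact s7_fkill hhe hhf hef hh a hah hfa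
end
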